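/- Monotonicity of best replies: in the network investment game with a fixed collateral matrix, fix a subset A of edges, an enterprise vertex k, and a player i with (k,i)∈E and (k,i)∉A. If, when the set of cooperate edges is A, player i strictly prefers to cooperate over defecting with respect to k, then for every set of cooperate edges B ⊇ A player i strictly prefers to cooperate over defecting with respect to k as well. -/

import Mathlib

open scoped BigOperators Classical

/-- A network investment game on `n` firms.  `x k i` is the amount that firm `i`
can invest in the enterprise of firm `k` (`x k i = 0` means that there is no
edge `(k,i)`), `Z k` is the operational cost of the enterprise of `k` and
`α k` is its interest rate.  As in the paper, `Z k = 0` (w.l.o.g.) for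
non-enterprise vertices and `α k > 0` for enterprise vertices. -/
structure InvestmentNetwork (n : ℕ) where
  x : Fin n → Fin n → ℝ
  Z : Fin n → ℝ
  α : Fin n → ℝ
  x_nonneg : ∀ k i, 0 ≤ x k i
  Z_nonneg : ∀ k, 0 ≤ Z k
  α_pos : ∀ k, (∃ i, 0 < x k i) → 0 < α k
  Z_spike : ∀ k, (∀ i, x k i = 0) → Z k = 0

namespace InvestmentNetwork

variable {n : ℕ}

/-- `k` is an enterprise vertex: it has at least one potential investor. -/
def IsEnterprise (N : InvestmentNetwork n) (k : Fin n) : Prop :=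
  ∃ i, 0 < N.x k i

/-- The set of edges `(k,i)` of the investment graph: `i` has an investment
opportunity in the enterprise of `k`. -/
noncomputable def edges (N : InvestmentNetwork n) : Finset (Fin n × Fin n) :=
  Finset.univ.filter (fun e => 0 < N.x e.1 e.2)

/-- A strategy profile is identified with its set of cooperate edges. -/
def IsProfile (N : InvestmentNetwork n) (C : Finset (Fin n × Fin n)) : Prop :=
  C ⊆ N.edges

/-- The total capital raised by enterprise `k` when `I` is a set of invest edges. -/
noncomputable def raised (N : InvestmentNetwork n) (I : Finset (Fin n × Fin n)) (k : Fin n) : ℝ :=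
  ∑ i : Fin n, if (k, i) ∈ I then N.x k i else 0

/-- `I` is a consistent set of invest edges within the cooperate edges `C`: the
investor of every edge of `I` is not in default when the invest edges are `I`. -/
def Consistent (N : InvestmentNetwork n) (C I : Finset (Fin n × Fin n)) : Prop :=
  I ⊆ C ∧ ∀ e ∈ I, N.Z e.2 ≤ N.raised I e.2

/-- The set of invest edges determined from the cooperate edges `C` by the
default-determination process (the greatest consistent subset of `C`,
i.e. the result of iteratively deleting the investments of defaulting firms). -/
noncomputable def investSet (N : InvestmentNetwork n) (C : Finset (Fin n × Fin n)) :
    Finset (Fin n × Fin n) :=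
  C.filter (fun e => ∃ I, N.Consistent C I ∧ e ∈ I)

/-- Firm `k` is in default under the cooperate edges `C`. -/
def Defaults (N : InvestmentNetwork n) (C : Finset (Fin n × Fin n)) (k : Fin n) : Prop :=
  N.raised (N.investSet C) k < N.Z k

/-- The enterprise return `R_{ki}` to investor `i` in enterprise `k` when the
set of invest edges is `I`. -/
noncomputable def ret (N : InvestmentNetwork n) (I : Finset (Fin n × Fin n)) (k i : Fin n) : ℝ :=
  max 0 ((1 + N.α k) * (N.raised I k - N.Z k) * (N.x k i / N.raised I k))

/-- The utility of firm `i` from the edge `(k,i)` under cooperate edges `C` and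
collateral matrix `c`: `x k i` if `i` defects, `0` if `i` cooperates but is in
default, and otherwise the return adjusted by the collateral. -/
noncomputable def edgeUtility (N : InvestmentNetwork n) (c : Fin n → Fin n → ℝ)
    (C : Finset (Fin n × Fin n)) (k i : Fin n) : ℝ :=
  if (k, i) ∉ C then N.x k i
  else if (k, i) ∉ N.investSet C then 0
  else if N.ret (N.investSet C) k i ≤ N.x k i - c k i then c k i + N.ret (N.investSet C) k i
  else if N.ret (N.investSet C) k i ≤ N.x k i then N.x k i
  else N.ret (N.investSet C) k i

/-- Total utility of firm `i`: the sum of her utilities over all her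
investment opportunities. -/
noncomputable def utility (N : InvestmentNetwork n) (c : Fin n → Fin n → ℝ)
    (C : Finset (Fin n × Fin n)) (i : Fin n) : ℝ :=
  ∑ k : Fin n, if (k, i) ∈ N.edges then N.edgeUtility c C k i else 0

/-- The number of investment opportunities in which `i` cooperates. -/
noncomputable def coopCount (C : Finset (Fin n × Fin n)) (i : Fin n) : ℕ :=
  (C.filter (fun e => e.2 = i)).card

/-- `c` is a collateral matrix: nonnegative and supported on the edges. -/
def IsCollateral (N : InvestmentNetwork n) (c : Fin n → Fin n → ℝ) : Prop :=
  ∀ k i, 0 ≤ c k i ∧ (N.x k i = 0 → c k i = 0)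

/-- `C'` is obtained from `C` by changing only decisions of player `i`. -/
def Deviation (C C' : Finset (Fin n × Fin n)) (i : Fin n) : Prop :=
  ∀ e : Fin n × Fin n, e.2 ≠ i → (e ∈ C ↔ e ∈ C')

/-- Nash equilibrium of the game induced by the collateral matrix `c`, with
ties broken towards investing: this is formalized by comparing utilities
lexicographically, an infinitesimal bonus being given for each cooperation. -/
def NashEq (N : InvestmentNetwork n) (c : Fin n → Fin n → ℝ)
    (C : Finset (Fin n × Fin n)) : Prop :=
  N.IsProfile C ∧
    ∀ (i : Fin n) (C' : Finset (Fin n × Fin n)), N.IsProfile C' → Deviation C C' i →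
      N.utility c C' i < N.utility c C i ∨
        (N.utility c C' i = N.utility c C i ∧ coopCount C' i ≤ coopCount C i)

/-- A viable collateral matrix: all-cooperate is the unique Nash equilibrium of
the induced game. -/
def Viable (N : InvestmentNetwork n) (c : Fin n → Fin n → ℝ) : Prop :=
  N.IsCollateral c ∧ N.NashEq c N.edges ∧ ∀ C, N.NashEq c C → C = N.edges

/-- The total collateral of a collateral matrix. -/
noncomputable def total (c : Fin n → Fin n → ℝ) : ℝ :=
  ∑ k : Fin n, ∑ i : Fin n, c k i

/-- An optimal solution of the collateral minimization problem: a viable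
collateral matrix of minimum total collateral. -/
def Optimal (N : InvestmentNetwork n) (c : Fin n → Fin n → ℝ) : Prop :=
  N.Viable c ∧ ∀ c', N.Viable c' → total c ≤ total c'

/-- All enterprises are (potentially) profitable:
`(1 + α k) * (X k - Z k) ≥ X k` where `X k = ∑ i, x k i`. -/
def Profitable (N : InvestmentNetwork n) : Prop :=
  ∀ k, N.IsEnterprise k → (∑ i, N.x k i) ≤ (1 + N.α k) * ((∑ i, N.x k i) - N.Z k)

/-- Player `i` strictly prefers (ties being broken towards investing) to
cooperate rather than to defect w.r.t. enterprise `k`, when the cooperate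
edges of the other decisions are those of `C`. -/
def StrictlyPrefersCoop (N : InvestmentNetwork n) (c : Fin n → Fin n → ℝ)
    (C : Finset (Fin n × Fin n)) (k i : Fin n) : Prop :=
  N.x k i ≤ N.edgeUtility c (insert (k, i) C) k i

/-- `σ` is an order of the edges along which iterated elimination of strictly
dominated strategies leads to the all-cooperate profile: at every step, given
that the previously processed edges cooperate, the player of the next edge
strictly prefers to cooperate whatever the remaining players do. -/
def ElimOrder (N : InvestmentNetwork n) (c : Fin n → Fin n → ℝ)
    (σ : List (Fin n × Fin n)) : Prop :=
  σ.Nodup ∧ (∀ e, e ∈ σ ↔ e ∈ N.edges) ∧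
    ∀ (t : ℕ) (ht : t < σ.length) (C : Finset (Fin n × Fin n)),
      N.IsProfile C → (∀ e ∈ σ.take t, e ∈ C) →
      N.StrictlyPrefersCoop c C (σ.get ⟨t, ht⟩).1 (σ.get ⟨t, ht⟩).2

end InvestmentNetwork

namespace InvestmentNetwork

lemma raised_mono' (N : InvestmentNetwork n) {I J : Finset (Fin n × Fin n)} (h : I ⊆ J)
    (k : Fin n) : N.raised I k ≤ N.raised J k := by
  apply Finset.sum_le_sum
  intro j _
  by_cases hj : (k, j) ∈ I
  · rw [if_pos hj, if_pos (h hj)]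
  · rw [if_neg hj]
    split_ifs with h2
    · exact N.x_nonneg k j
    · exact le_rfl

lemma x_le_raised' (N : InvestmentNetwork n) {I : Finset (Fin n × Fin n)} {k i : Fin n}
    (h : (k, i) ∈ I) : N.x k i ≤ N.raised I k := by
  have := Finset.single_le_sum (f := fun j => if (k, j) ∈ I then N.x k j else 0)
    (fun j _ => by split_ifs with hj; exacts [N.x_nonneg k j, le_rfl])
    (Finset.mem_univ i)
  simpa [h, raised] using this

lemma investSet_mono' (N : InvestmentNetwork n) {A B : Finset (Fin n × Fin n)} (h : A ⊆ B) :
    N.investSet A ⊆ N.investSet B := by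
  intro e he
  simp only [investSet, Finset.mem_filter] at he ⊢
  obtain ⟨heA, I, hI, heI⟩ := he
  exact ⟨h heA, I, ⟨hI.1.trans h, hI.2⟩, heI⟩

end InvestmentNetwork

/-- **Monotonicity of best replies (Proposition 1(2)).**  Fix a collateral
matrix, a subset `A` of edges, an enterprise vertex `k` and a player `i` with
`(k,i) ∈ E`, `(k,i) ∉ A`.  If, when the cooperate edges are `A`, player `i`
strictly prefers to cooperate over defecting w.r.t. `k`, then for every
cooperate-edge set `B ⊇ A` she strictly prefers to cooperate w.r.t. `k` as
well. -/
theorem bestReply_monotone {n : ℕ} (N : InvestmentNetwork n)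
    (c : Fin n → Fin n → ℝ) (hc : N.IsCollateral c)
    (A B : Finset (Fin n × Fin n))
    (hA : N.IsProfile A) (hB : N.IsProfile B) (hAB : A ⊆ B)
    (k : Fin n) (hk : N.IsEnterprise k) (i : Fin n)
    (hE : (k, i) ∈ N.edges) (hiA : (k, i) ∉ A)
    (hpref : N.StrictlyPrefersCoop c A k i) :
    N.StrictlyPrefersCoop c B k i := by
  have hx : 0 < N.x k i := (Finset.mem_filter.mp hE).2
  have hc0 : 0 ≤ c k i := (hc k i).1
  set CA := insert (k, i) A with hCA
  set CB := insert (k, i) B with hCB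
  have hmemA : (k, i) ∈ CA := Finset.mem_insert_self _ _
  have hmemB : (k, i) ∈ CB := Finset.mem_insert_self _ _
  have hsub : CA ⊆ CB := Finset.insert_subset_insert _ hAB
  unfold InvestmentNetwork.StrictlyPrefersCoop InvestmentNetwork.edgeUtility at hpref ⊢
  rw [if_neg (not_not_intro hmemA)] at hpref
  rw [if_neg (not_not_intro hmemB)]
  -- (k,i) is an invest edge under CA
  have hIA : (k, i) ∈ N.investSet CA := by
    by_contra h
    rw [if_pos h] at hpref
    linarith
  rw [if_neg (not_not_intro hIA)] at hpref
  have hIB : (k, i) ∈ N.investSet CB := N.investSet_mono' hsub hIA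
  rw [if_neg (not_not_intro hIB)]
  -- raised capital monotonicity
  set rA := N.raised (N.investSet CA) k with hrA
  set rB := N.raised (N.investSet CB) k with hrB
  have hrApos : 0 < rA := lt_of_lt_of_le hx (N.x_le_raised' hIA)
  have hrAB : rA ≤ rB := N.raised_mono' (N.investSet_mono' hsub) k
  have hrBpos : 0 < rB := lt_of_lt_of_le hrApos hrAB
  have hZ : 0 ≤ N.Z k := N.Z_nonneg k
  have hα : 0 ≤ 1 + N.α k := by have := N.α_pos k hk; linarith
  -- return monotonicity
  have hretAB : N.ret (N.investSet CA) k i ≤ N.ret (N.investSet CB) k i := by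
    unfold InvestmentNetwork.ret
    apply max_le_max le_rfl
    rw [mul_assoc, mul_assoc]
    apply mul_le_mul_of_nonneg_left _ hα
    rw [← mul_div_assoc, ← mul_div_assoc, div_le_div_iff₀ hrApos hrBpos]
    nlinarith [mul_nonneg (mul_nonneg hZ hx.le) (sub_nonneg.2 hrAB)]
  set RA := N.ret (N.investSet CA) k i with hRA
  set RB := N.ret (N.investSet CB) k i with hRB
  -- from hpref: x - c ≤ RA
  have hkey : N.x k i - c k i ≤ RA := by
    split_ifs at hpref with h1 h2
    · linarith
    · linarith
    · linarith
  have hkeyB : N.x k i - c k i ≤ RB := le_trans hkey hretAB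
  split_ifs with h1 h2
  · linarith
  · linarith
  · linarith
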